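/- Let S be a finite set of integers with min S ≥ 2. Then there exists a mixed hypergraph H on at most 2·max S − min S vertices that is a one-realization of S (feasible set S and each entry of the chromatic spectrum 0 or 1). -/

import Mathlib

/-- A mixed hypergraph on vertex type `V`: families of C-edges and D-edges. -/
structure MixedHypergraph (V : Type*) where
  Cedges : Set (Set V)
  Dedges : Set (Set V)

/-- A strict `k`-coloring: a surjective coloring with `k` colors such that every
C-edge has two distinct vertices with a common color and every D-edge has two
distinct vertices with distinct colors. -/
def IsStrictColoring {V : Type*} (H : MixedHypergraph V) (k : ℕ) (f : V → Fin k) : Prop :=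
  Function.Surjective f ∧
  (∀ e ∈ H.Cedges, ∃ u ∈ e, ∃ v ∈ e, u ≠ v ∧ f u = f v) ∧
  (∀ e ∈ H.Dedges, ∃ u ∈ e, ∃ v ∈ e, u ≠ v ∧ f u ≠ f v)

/-- The feasible set of a mixed hypergraph. -/
def FeasibleSet {V : Type*} (H : MixedHypergraph V) : Set ℕ :=
  {k | ∃ f : V → Fin k, IsStrictColoring H k f}

/-- Two colorings induce the same partition of the vertex set. -/
def SamePartition {V : Type*} {k k' : ℕ} (f : V → Fin k) (g : V → Fin k') : Prop :=
  ∀ u v, f u = f v ↔ g u = g v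

/-- `H` is a one-realization of `S`: its feasible set is `S` and for each `k`
the partition induced by a strict `k`-coloring is unique. -/
def IsOneRealization {V : Type*} (H : MixedHypergraph V) (S : Set ℕ) : Prop :=
  FeasibleSet H = S ∧
  ∀ (k : ℕ) (f g : V → Fin k), IsStrictColoring H k f → IsStrictColoring H k g →
    SamePartition f g

namespace OneReal

abbrev V (c d : ℕ) := ((Fin (c+1) ⊕ Fin d) ⊕ Fin d) ⊕ Fin 1

variable {c d : ℕ}

def vx (m : Fin (c+1)) : V c d := .inl (.inl (.inl m))
def vp (i : Fin d) : V c d := .inl (.inl (.inr i))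
def vq (i : Fin d) : V c d := .inl (.inr i)
def vz : V c d := .inr 0

@[simp] lemma vx_ne_vp (m : Fin (c+1)) (i : Fin d) : vx m ≠ vp i := by simp [vx, vp]
@[simp] lemma vx_ne_vq (m : Fin (c+1)) (i : Fin d) : vx m ≠ vq i := by simp [vx, vq]
@[simp] lemma vx_ne_vz (m : Fin (c+1)) : (vx m : V c d) ≠ vz := by simp [vx, vz]
@[simp] lemma vp_ne_vq (i j : Fin d) : (vp i : V c d) ≠ vq j := by simp [vp, vq]
@[simp] lemma vp_ne_vz (i : Fin d) : (vp i : V c d) ≠ vz := by simp [vp, vz]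
@[simp] lemma vq_ne_vz (i : Fin d) : (vq i : V c d) ≠ vz := by simp [vq, vz]
@[simp] lemma vp_ne_vx (i : Fin d) (m : Fin (c+1)) : vp i ≠ vx m := by simp [vx, vp]
@[simp] lemma vq_ne_vx (i : Fin d) (m : Fin (c+1)) : vq i ≠ vx m := by simp [vx, vq]
@[simp] lemma vz_ne_vx (m : Fin (c+1)) : (vz : V c d) ≠ vx m := by simp [vx, vz]
@[simp] lemma vq_ne_vp (i j : Fin d) : (vq i : V c d) ≠ vp j := by simp [vp, vq]
@[simp] lemma vz_ne_vp (i : Fin d) : (vz : V c d) ≠ vp i := by simp [vp, vz]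
@[simp] lemma vz_ne_vq (i : Fin d) : (vz : V c d) ≠ vq i := by simp [vq, vz]
@[simp] lemma vx_inj {m m' : Fin (c+1)} : (vx m : V c d) = vx m' ↔ m = m' := by simp [vx]
@[simp] lemma vp_inj {i j : Fin d} : (vp i : V c d) = vp j ↔ i = j := by simp [vp]
@[simp] lemma vq_inj {i j : Fin d} : (vq i : V c d) = vq j ↔ i = j := by simp [vq]

def hyp (c d : ℕ) (P : ℕ → Prop) : MixedHypergraph (V c d) where
  Cedges := {e | (∃ i, e = {vz, vp i, vq i}) ∨ (∃ i, e = {vx 0, vp i, vq i}) ∨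
    (∃ i j : Fin d, i < j ∧ e = {vp i, vq i, vq j}) ∨
    (∃ i j : Fin d, (j : ℕ) = (i : ℕ) + 1 ∧ ¬ P (j : ℕ) ∧ e = {vp i, vp j, vq j})}
  Dedges := {e | (∃ m m' : Fin (c+1), m ≠ m' ∧ e = {vx m, vx m'}) ∨
    (∃ m, e = {vx m, vz}) ∨ (∃ m i, e = {vx m, vp i}) ∨
    (∃ m i, m ≠ 0 ∧ e = {vx m, vq i}) ∨ (∃ i, e = {vz, vq i}) ∨
    (∃ i j, i ≠ j ∧ e = {vp i, vq j})}

end OneReal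

namespace OneReal

variable {c d : ℕ}

def col (c d t : ℕ) : V c d → ℕ
  | Sum.inl (Sum.inl (Sum.inl m)) => m
  | Sum.inl (Sum.inl (Sum.inr i)) => if (i : ℕ) < t then c+2+(i : ℕ) else c+1
  | Sum.inl (Sum.inr i) => if (i : ℕ) < t then c+2+(i : ℕ) else 0
  | Sum.inr _ => c+1

@[simp] lemma col_vx (t : ℕ) (m : Fin (c+1)) : col c d t (vx m) = m := rfl
@[simp] lemma col_vp (t : ℕ) (i : Fin d) :
    col c d t (vp i) = if (i : ℕ) < t then c+2+(i : ℕ) else c+1 := rfl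
@[simp] lemma col_vq (t : ℕ) (i : Fin d) :
    col c d t (vq i) = if (i : ℕ) < t then c+2+(i : ℕ) else 0 := rfl
@[simp] lemma col_vz (t : ℕ) : col c d t (vz : V c d) = c+1 := rfl

lemma col_lt (t : ℕ) (v : V c d) : col c d t v < c+2+t := by
  rcases v with ((m | i) | i) | u
  · have := m.isLt; simp [col]; omega
  · simp only [col]; split <;> omega
  · simp only [col]; split <;> omega
  · simp only [col]; omega

def fct (c d t : ℕ) (v : V c d) : Fin (c+2+t) := ⟨col c d t v, col_lt t v⟩

lemma strict_fct (P : ℕ → Prop) (t : ℕ) (htd : t ≤ d) (hPt : P t) :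
    IsStrictColoring (hyp c d P) (c+2+t) (fct c d t) := by
  refine ⟨?_, ?_, ?_⟩
  · -- surjectivity
    rintro ⟨y, hy⟩
    rcases lt_trichotomy y (c+1) with h | h | h
    · exact ⟨vx ⟨y, h⟩, rfl⟩
    · exact ⟨vz, by simp [fct, Fin.ext_iff, h]⟩
    · refine ⟨vp ⟨y - (c+2), by omega⟩, ?_⟩
      simp only [fct, Fin.ext_iff, col_vp]
      have : y - (c+2) < t := by omega
      simp [this]; omega
  · rintro e (⟨i, rfl⟩ | ⟨i, rfl⟩ | ⟨i, j, hij, rfl⟩ | ⟨i, j, hij, hPj, rfl⟩)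
    · by_cases h : (i : ℕ) < t
      · exact ⟨vp i, by simp, vq i, by simp, by simp, by simp [fct, Fin.ext_iff, h]⟩
      · exact ⟨vz, by simp, vp i, by simp, by simp, by simp [fct, Fin.ext_iff, h]⟩
    · by_cases h : (i : ℕ) < t
      · exact ⟨vp i, by simp, vq i, by simp, by simp, by simp [fct, Fin.ext_iff, h]⟩
      · exact ⟨vx 0, by simp, vq i, by simp, by simp, by simp [fct, Fin.ext_iff, h]⟩
    · by_cases h : (i : ℕ) < t
      · exact ⟨vp i, by simp, vq i, by simp, by simp, by simp [fct, Fin.ext_iff, h]⟩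
      · have hj : ¬ (j : ℕ) < t := by have := hij; omega
        refine ⟨vq i, by simp, vq j, by simp, by simp [Fin.ext_iff]; omega, ?_⟩
        simp [fct, Fin.ext_iff, h, hj]
    · -- G edge {vp i, vp j, vq j}, (j:ℕ) = i+1, ¬ P j
      by_cases h : (j : ℕ) < t
      · exact ⟨vp j, by simp, vq j, by simp, by simp, by simp [fct, Fin.ext_iff, h]⟩
      · have hi : ¬ (i : ℕ) < t := by
          by_contra hi
          have : t = (j : ℕ) := by omega
          exact hPj (this ▸ hPt)
        refine ⟨vp i, by simp, vp j, by simp, by simp [Fin.ext_iff]; omega, ?_⟩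
        simp [fct, Fin.ext_iff, h, hi]
  · rintro e (⟨m, m', hmm, rfl⟩ | ⟨m, rfl⟩ | ⟨m, i, rfl⟩ | ⟨m, i, hm, rfl⟩ | ⟨i, rfl⟩ |
      ⟨i, j, hij, rfl⟩)
    · refine ⟨vx m, by simp, vx m', by simp, by simp [hmm], ?_⟩
      simp [fct, Fin.ext_iff]
      exact fun h => hmm (Fin.ext h)
    · refine ⟨vx m, by simp, vz, by simp, by simp, ?_⟩
      have := m.isLt; simp [fct, Fin.ext_iff]; omega
    · refine ⟨vx m, by simp, vp i, by simp, by simp, ?_⟩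
      have := m.isLt; simp [fct, Fin.ext_iff]; split <;> omega
    · refine ⟨vx m, by simp, vq i, by simp, by simp, ?_⟩
      have hm' : (m : ℕ) ≠ 0 := fun h => hm (Fin.ext (by simp [h]))
      have := m.isLt; simp [fct, Fin.ext_iff]; split <;> omega
    · refine ⟨vz, by simp, vq i, by simp, by simp, ?_⟩
      simp [fct, Fin.ext_iff]; split <;> omega
    · refine ⟨vp i, by simp, vq j, by simp, by simp, ?_⟩
      have hij' : (i : ℕ) ≠ (j : ℕ) := fun h => hij (Fin.ext h)
      simp [fct, Fin.ext_iff]; split <;> split <;> omega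

end OneReal

namespace OneReal

variable {c d : ℕ}

lemma D_pair {α β : Type*} {g : α → β} {A B : α}
    (h : ∃ u ∈ ({A, B} : Set α), ∃ v ∈ ({A, B} : Set α), u ≠ v ∧ g u ≠ g v) :
    g A ≠ g B := by
  obtain ⟨u, hu, v, hv, huv, hg⟩ := h
  rcases hu with rfl | rfl <;> rcases hv with rfl | rfl <;>
    first | exact hg | exact fun h => hg h.symm | exact absurd rfl huv

lemma C_tri {α β : Type*} {g : α → β} {A B C : α}
    (h : ∃ u ∈ ({A, B, C} : Set α), ∃ v ∈ ({A, B, C} : Set α), u ≠ v ∧ g u = g v) :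
    g A = g B ∨ g A = g C ∨ g B = g C := by
  obtain ⟨u, hu, v, hv, huv, hg⟩ := h
  rcases hu with rfl | rfl | rfl <;> rcases hv with rfl | rfl | rfl <;>
    first | exact absurd rfl huv | tauto | (exact Or.inl hg.symm) |
      (exact Or.inr (Or.inl hg.symm)) | (exact Or.inr (Or.inr hg.symm))

lemma downward_card {n : ℕ} (T : Finset (Fin n))
    (hdc : ∀ i j : Fin n, i ≤ j → j ∈ T → i ∈ T) (i : Fin n) :
    i ∈ T ↔ (i : ℕ) < T.card := by
  constructor
  · intro hi
    have hsub : Finset.Iic i ⊆ T := fun j hj => hdc j i (Finset.mem_Iic.mp hj) hi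
    have := Finset.card_le_card hsub
    rw [Fin.card_Iic] at this
    omega
  · intro hi
    by_contra hmem
    have hsub : T ⊆ Finset.Iio i := by
      intro j hj
      rw [Finset.mem_Iio]
      by_contra hji
      exact hmem (hdc i j (le_of_not_gt hji) hj)
    have := Finset.card_le_card hsub
    rw [Fin.card_Iio] at this
    omega

section Backward

variable {P : ℕ → Prop} {k : ℕ} {g : V c d → Fin k}
  (hg : IsStrictColoring (hyp c d P) k g)

include hg

lemma g_x_ne {m m' : Fin (c+1)} (h : m ≠ m') : g (vx m) ≠ g (vx m') :=
  D_pair (hg.2.2 _ (Or.inl ⟨m, m', h, rfl⟩))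

lemma g_xz (m : Fin (c+1)) : g (vx m) ≠ g vz :=
  D_pair (hg.2.2 _ (Or.inr (Or.inl ⟨m, rfl⟩)))

lemma g_xp (m : Fin (c+1)) (i : Fin d) : g (vx m) ≠ g (vp i) :=
  D_pair (hg.2.2 _ (Or.inr (Or.inr (Or.inl ⟨m, i, rfl⟩))))

lemma g_xq {m : Fin (c+1)} (h : m ≠ 0) (i : Fin d) : g (vx m) ≠ g (vq i) :=
  D_pair (hg.2.2 _ (Or.inr (Or.inr (Or.inr (Or.inl ⟨m, i, h, rfl⟩)))))

lemma g_zq (i : Fin d) : g (vz : V c d) ≠ g (vq i) :=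
  D_pair (hg.2.2 _ (Or.inr (Or.inr (Or.inr (Or.inr (Or.inl ⟨i, rfl⟩))))))

lemma g_pq {i j : Fin d} (h : i ≠ j) : g (vp i) ≠ g (vq j) :=
  D_pair (hg.2.2 _ (Or.inr (Or.inr (Or.inr (Or.inr (Or.inr ⟨i, j, h, rfl⟩))))))

lemma g_A (i : Fin d) : g (vp i) = g (vq i) ∨ g (vp i) = g (vz : V c d) := by
  have := C_tri (hg.2.1 _ (Or.inl ⟨i, rfl⟩))
  rcases this with h | h | h
  · exact Or.inr h.symm
  · exact absurd h (g_zq hg i)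
  · exact Or.inl h

lemma g_B (i : Fin d) : g (vq i) = g (vp i) ∨ g (vq i) = g (vx 0) := by
  have := C_tri (hg.2.1 _ (Or.inr (Or.inl ⟨i, rfl⟩)))
  rcases this with h | h | h
  · exact absurd h (g_xp hg 0 i)
  · exact Or.inr h.symm
  · exact Or.inl h.symm

lemma g_E {i j : Fin d} (hij : i < j) (hj : g (vp j) = g (vq j)) :
    g (vp i) = g (vq i) := by
  have := C_tri (hg.2.1 _ (Or.inr (Or.inr (Or.inl ⟨i, j, hij, rfl⟩))))
  rcases this with h | h | h
  · exact h
  · exact absurd h (g_pq hg (ne_of_lt hij))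
  · rcases g_B hg i with h' | h'
    · exact h'.symm
    · exfalso
      exact g_xp hg 0 j (h'.symm.trans (h.trans hj.symm))

end Backward

end OneReal


namespace OneReal

variable {c d : ℕ}

lemma v_cases (v : V c d) :
    (∃ m, v = vx m) ∨ (∃ i, v = vp i) ∨ (∃ i, v = vq i) ∨ v = vz := by
  rcases v with ((m | i) | i) | u
  · exact Or.inl ⟨m, rfl⟩
  · exact Or.inr (Or.inl ⟨i, rfl⟩)
  · exact Or.inr (Or.inr (Or.inl ⟨i, rfl⟩))
  · exact Or.inr (Or.inr (Or.inr (by rw [Subsingleton.elim u 0]; rfl)))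

def colRep (c d t : ℕ) : V c d → V c d
  | Sum.inl (Sum.inl (Sum.inl m)) => vx m
  | Sum.inl (Sum.inl (Sum.inr i)) => if (i : ℕ) < t then vp i else vz
  | Sum.inl (Sum.inr i) => if (i : ℕ) < t then vp i else vx 0
  | Sum.inr _ => vz

@[simp] lemma colRep_vx (t : ℕ) (m : Fin (c+1)) : colRep c d t (vx m) = vx m := rfl
@[simp] lemma colRep_vp (t : ℕ) (i : Fin d) :
    colRep c d t (vp i) = if (i : ℕ) < t then vp i else vz := rfl
@[simp] lemma colRep_vq (t : ℕ) (i : Fin d) :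
    colRep c d t (vq i) = if (i : ℕ) < t then vp i else vx 0 := rfl
@[simp] lemma colRep_vz (t : ℕ) : colRep c d t (vz : V c d) = vz := rfl

lemma colRep_spec (t : ℕ) (v : V c d) :
    (∃ m, colRep c d t v = vx m) ∨ colRep c d t v = vz ∨
      (∃ i : Fin d, (i : ℕ) < t ∧ colRep c d t v = vp i) := by
  rcases v_cases v with ⟨m, rfl⟩ | ⟨i, rfl⟩ | ⟨i, rfl⟩ | rfl
  · exact Or.inl ⟨m, rfl⟩
  · by_cases h : (i : ℕ) < t
    · exact Or.inr (Or.inr ⟨i, h, by simp [h]⟩)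
    · exact Or.inr (Or.inl (by simp [h]))
  · by_cases h : (i : ℕ) < t
    · exact Or.inr (Or.inr ⟨i, h, by simp [h]⟩)
    · exact Or.inl ⟨0, by simp [h]⟩
  · exact Or.inr (Or.inl rfl)

theorem classify {P : ℕ → Prop} {k : ℕ} {g : V c d → Fin k}
    (hP0 : P 0) (hPd : P d) (hg : IsStrictColoring (hyp c d P) k g) :
    ∃ t, t ≤ d ∧ P t ∧ k = c + 2 + t ∧
      ∀ u v, (g u = g v ↔ colRep c d t u = colRep c d t v) := by
  classical
  set T : Finset (Fin d) := Finset.univ.filter (fun i => g (vp i) = g (vq i)) with hT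
  have hmemT' : ∀ i : Fin d, i ∈ T ↔ g (vp i) = g (vq i) := by
    intro i; simp [hT]
  have hdc : ∀ i j : Fin d, i ≤ j → j ∈ T → i ∈ T := by
    intro i j hij hj
    rcases eq_or_lt_of_le hij with rfl | hlt
    · exact hj
    · exact (hmemT' i).mpr (g_E hg hlt ((hmemT' j).mp hj))
  refine ⟨T.card, ?_, ?_, ?_, ?_⟩
  all_goals
    have hmemT : ∀ i : Fin d, g (vp i) = g (vq i) ↔ (i : ℕ) < T.card := by
      intro i; rw [← hmemT' i]; exact downward_card T hdc i
    have htd : T.card ≤ d := by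
      have := Finset.card_le_univ T
      simpa using this
    have hpq : ∀ i : Fin d, (i : ℕ) < T.card → g (vp i) = g (vq i) :=
      fun i h => (hmemT i).mpr h
    have hpz : ∀ i : Fin d, ¬ (i : ℕ) < T.card → g (vp i) = g (vz : V c d) := by
      intro i h
      rcases g_A hg i with h' | h'
      · exact absurd ((hmemT i).mp h') h
      · exact h'
    have hqx : ∀ i : Fin d, ¬ (i : ℕ) < T.card → g (vq i) = g (vx 0) := by
      intro i h
      rcases g_B hg i with h' | h'
      · exact absurd ((hmemT i).mp h'.symm) h
      · exact h'
    have hkey : ∀ w w' : V c d,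
        ((∃ m, w = vx m) ∨ w = vz ∨ (∃ i : Fin d, (i : ℕ) < T.card ∧ w = vp i)) →
        ((∃ m, w' = vx m) ∨ w' = vz ∨ (∃ i : Fin d, (i : ℕ) < T.card ∧ w' = vp i)) →
        g w = g w' → w = w' := by
      rintro w w' (⟨m, rfl⟩ | rfl | ⟨i, hi, rfl⟩) (⟨m', rfl⟩ | rfl | ⟨j, hj, rfl⟩) heq
      · by_cases hmm : m = m'
        · rw [hmm]
        · exact absurd heq (g_x_ne hg hmm)
      · exact absurd heq (g_xz hg m)
      · exact absurd heq (g_xp hg m j)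
      · exact absurd heq.symm (g_xz hg m')
      · rfl
      · exact absurd (heq.trans (hpq j hj)) (g_zq hg j)
      · exact absurd heq.symm (g_xp hg m' i)
      · exact absurd (heq.symm.trans (hpq i hi)) (g_zq hg i)
      · by_cases hij : i = j
        · rw [hij]
        · exact absurd (heq.trans (hpq j hj)) (g_pq hg hij)
    have hrep : ∀ v, g (colRep c d T.card v) = g v := by
      intro v
      rcases v_cases v with ⟨m, rfl⟩ | ⟨i, rfl⟩ | ⟨i, rfl⟩ | rfl
      · rfl
      · by_cases h : (i : ℕ) < T.card
        · simp [h]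
        · simp only [colRep_vp, if_neg h]
          exact (hpz i h).symm
      · by_cases h : (i : ℕ) < T.card
        · simp only [colRep_vq, if_pos h]
          exact hpq i h
        · simp only [colRep_vq, if_neg h]
          exact (hqx i h).symm
      · rfl
  -- goal 0 : T.card ≤ d
  · exact htd
  -- goal 1 : P T.card
  · rcases Nat.eq_zero_or_pos T.card with h0 | htpos
    · rw [h0]; exact hP0
    rcases eq_or_lt_of_le htd with heq | htlt
    · rw [heq]; exact hPd
    by_contra hPt
    have hC := C_tri (hg.2.1 _ (Or.inr (Or.inr (Or.inr
      ⟨⟨T.card - 1, by omega⟩, ⟨T.card, htlt⟩, by simp; omega, by simpa using hPt, rfl⟩))))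
    have hij : (⟨T.card - 1, by omega⟩ : Fin d) ≠ ⟨T.card, htlt⟩ := by
      simp [Fin.ext_iff]; omega
    rcases hC with h | h | h
    · have h1 : g (vp (⟨T.card - 1, by omega⟩ : Fin d)) = g (vq ⟨T.card - 1, by omega⟩) :=
        hpq _ (Nat.sub_lt htpos Nat.one_pos)
      exact g_pq hg (Ne.symm hij) (h.symm.trans h1)
    · exact g_pq hg hij h
    · exact absurd ((hmemT _).mp h) (by simp)
  -- goal 2 : k = c + 2 + T.card
  · let φ : Fin (c+2+T.card) → V c d := fun y =>
      if h : (y : ℕ) < c+1 then vx ⟨y, h⟩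
      else if h' : (y : ℕ) = c+1 then vz
      else vp ⟨(y : ℕ) - (c+2), by have := y.isLt; omega⟩
    have hφx : ∀ (m : Fin (c+1)), φ ⟨(m : ℕ), by have := m.isLt; omega⟩ = vx m := by
      intro m; simp [φ, Fin.is_le m]
    have hφz : φ ⟨c+1, by omega⟩ = vz := by simp [φ]
    have hφp : ∀ (i : Fin d) (hi : (i : ℕ) < T.card), φ ⟨c+2+(i : ℕ), by omega⟩ = vp i := by
      intro i hi
      have h1 : ¬ (c+2+(i : ℕ) < c+1) := by omega
      have h2 : ¬ (c+2+(i : ℕ) = c+1) := by omega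
      simp only [φ, dif_neg h1, dif_neg h2]
      congr 1
      simp [Fin.ext_iff]
    have hspec : ∀ y : Fin (c+2+T.card),
        (∃ m : Fin (c+1), φ y = vx m ∧ (y : ℕ) = (m : ℕ)) ∨
        (φ y = vz ∧ (y : ℕ) = c+1) ∨
        (∃ i : Fin d, (i : ℕ) < T.card ∧ φ y = vp i ∧ (y : ℕ) = c+2+(i : ℕ)) := by
      intro y
      by_cases h : (y : ℕ) < c+1
      · exact Or.inl ⟨⟨y, h⟩, by simp [φ, h, Nat.lt_succ_iff.mp h], rfl⟩
      · by_cases h' : (y : ℕ) = c+1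
        · exact Or.inr (Or.inl ⟨by simp [φ, h, h'], h'⟩)
        · refine Or.inr (Or.inr ⟨⟨(y : ℕ) - (c+2), by have := y.isLt; omega⟩,
            by have := y.isLt; simp; omega, by simp [φ, h, h']; rw [dif_neg (by omega)], by simp; have := y.isLt; omega⟩)
    have hbij : Function.Bijective (g ∘ φ) := by
      constructor
      · intro y y' heq
        simp only [Function.comp] at heq
        have hspy := hspec y
        have hspy' := hspec y'
        have hφeq : φ y = φ y' := by
          refine hkey _ _ ?_ ?_ heq
          · rcases hspy with ⟨m, hy, _⟩ | ⟨hy, _⟩ | ⟨i, hi, hy, _⟩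
            exacts [Or.inl ⟨m, hy⟩, Or.inr (Or.inl hy), Or.inr (Or.inr ⟨i, hi, hy⟩)]
          · rcases hspy' with ⟨m, hy, _⟩ | ⟨hy, _⟩ | ⟨i, hi, hy, _⟩
            exacts [Or.inl ⟨m, hy⟩, Or.inr (Or.inl hy), Or.inr (Or.inr ⟨i, hi, hy⟩)]
        apply Fin.ext
        rcases hspy with ⟨m, hy, hym⟩ | ⟨hy, hym⟩ | ⟨i, hi, hy, hym⟩ <;>
          rcases hspy' with ⟨m', hy', hym'⟩ | ⟨hy', hym'⟩ | ⟨j, hj, hy', hym'⟩ <;>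
          rw [hy, hy'] at hφeq <;> rw [hym, hym'] <;>
          first
          | (rw [vx_inj] at hφeq; rw [hφeq])
          | (rw [vp_inj] at hφeq; rw [hφeq])
          | rfl
          | (exfalso; exact vx_ne_vz _ hφeq)
          | (exfalso; exact vx_ne_vp _ _ hφeq)
          | (exfalso; exact vz_ne_vx _ hφeq)
          | (exfalso; exact vz_ne_vp _ hφeq)
          | (exfalso; exact vp_ne_vx _ _ hφeq)
          | (exfalso; exact vp_ne_vz _ hφeq)
      · intro y
        obtain ⟨v, hv⟩ := hg.1 y
        rcases colRep_spec T.card v with ⟨m, hr⟩ | hr | ⟨i, hi, hr⟩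
        · refine ⟨⟨(m : ℕ), by have := m.isLt; omega⟩, ?_⟩
          simp only [Function.comp, hφx]
          rw [show (vx m : V c d) = colRep c d T.card v from hr.symm, hrep v, hv]
        · refine ⟨⟨c+1, by omega⟩, ?_⟩
          simp only [Function.comp, hφz]
          rw [show (vz : V c d) = colRep c d T.card v from hr.symm, hrep v, hv]
        · refine ⟨⟨c+2+(i : ℕ), by omega⟩, ?_⟩
          simp only [Function.comp, hφp i hi]
          rw [show (vp i : V c d) = colRep c d T.card v from hr.symm, hrep v, hv]
    have := Fintype.card_of_bijective hbij
    simpa using this.symm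
  -- goal 3 : the iff
  · intro u v
    constructor
    · intro h
      refine hkey _ _ ?_ ?_ (by rw [hrep u, hrep v]; exact h)
      · rcases colRep_spec T.card u with ⟨m, hr⟩ | hr | ⟨i, hi, hr⟩
        exacts [Or.inl ⟨m, hr⟩, Or.inr (Or.inl hr), Or.inr (Or.inr ⟨i, hi, hr⟩)]
      · rcases colRep_spec T.card v with ⟨m, hr⟩ | hr | ⟨i, hi, hr⟩
        exacts [Or.inl ⟨m, hr⟩, Or.inr (Or.inl hr), Or.inr (Or.inr ⟨i, hi, hr⟩)]
    · intro h
      rw [← hrep u, ← hrep v, h]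

end OneReal

namespace OneReal

theorem oneReal (c d : ℕ) (P : ℕ → Prop) (hP0 : P 0) (hPd : P d) :
    IsOneRealization (hyp c d P) {k | ∃ t, t ≤ d ∧ P t ∧ k = c + 2 + t} := by
  constructor
  · ext k
    simp only [FeasibleSet, Set.mem_setOf_eq]
    constructor
    · rintro ⟨f, hf⟩
      obtain ⟨t, htd, hPt, hk, -⟩ := classify hP0 hPd hf
      exact ⟨t, htd, hPt, hk⟩
    · rintro ⟨t, htd, hPt, rfl⟩
      exact ⟨fct c d t, strict_fct P t htd hPt⟩
  · intro k f g hf hg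
    obtain ⟨t, -, -, hk, hf'⟩ := classify hP0 hPd hf
    obtain ⟨t', -, -, hk', hg'⟩ := classify hP0 hPd hg
    have htt : t = t' := by omega
    subst htt
    intro u v
    rw [hf' u v, hg' u v]

def mapHG {V W : Type*} (e : V ≃ W) (H : MixedHypergraph V) : MixedHypergraph W :=
  ⟨(fun s => e '' s) '' H.Cedges, (fun s => e '' s) '' H.Dedges⟩

lemma edge_transfer {V W : Type*} (e : V ≃ W) {k : ℕ} (f : W → Fin k) (s : Set V)
    (Q : Fin k → Fin k → Prop) :
    (∃ u ∈ e '' s, ∃ v ∈ e '' s, u ≠ v ∧ Q (f u) (f v)) ↔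
      (∃ u ∈ s, ∃ v ∈ s, u ≠ v ∧ Q ((f ∘ e) u) ((f ∘ e) v)) := by
  constructor
  · rintro ⟨u, ⟨u', hu', rfl⟩, v, ⟨v', hv', rfl⟩, huv, hQ⟩
    exact ⟨u', hu', v', hv', fun h => huv (by rw [h]), hQ⟩
  · rintro ⟨u', hu', v', hv', huv, hQ⟩
    exact ⟨e u', ⟨u', hu', rfl⟩, e v', ⟨v', hv', rfl⟩, fun h => huv (e.injective h), hQ⟩

lemma strict_map {V W : Type*} (e : V ≃ W) (H : MixedHypergraph V) (k : ℕ) (f : W → Fin k) :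
    IsStrictColoring (mapHG e H) k f ↔ IsStrictColoring H k (f ∘ e) := by
  constructor
  · rintro ⟨hsurj, hC, hD⟩
    refine ⟨hsurj.comp e.surjective, ?_, ?_⟩
    · intro s hs
      exact (edge_transfer e f s (fun a b => a = b)).mp (hC (e '' s) ⟨s, hs, rfl⟩)
    · intro s hs
      exact (edge_transfer e f s (fun a b => a ≠ b)).mp (hD (e '' s) ⟨s, hs, rfl⟩)
  · rintro ⟨hsurj, hC, hD⟩
    refine ⟨fun y => by obtain ⟨v, hv⟩ := hsurj y; exact ⟨e v, hv⟩, ?_, ?_⟩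
    · rintro s' ⟨s, hs, rfl⟩
      exact (edge_transfer e f s (fun a b => a = b)).mpr (hC s hs)
    · rintro s' ⟨s, hs, rfl⟩
      exact (edge_transfer e f s (fun a b => a ≠ b)).mpr (hD s hs)

lemma oneRealization_map {V W : Type*} (e : V ≃ W) (H : MixedHypergraph V) (S : Set ℕ)
    (h : IsOneRealization H S) : IsOneRealization (mapHG e H) S := by
  constructor
  · rw [← h.1]
    ext k
    simp only [FeasibleSet, Set.mem_setOf_eq]
    constructor
    · rintro ⟨f, hf⟩
      exact ⟨f ∘ e, (strict_map e H k f).mp hf⟩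
    · rintro ⟨g, hg⟩
      refine ⟨g ∘ e.symm, (strict_map e H k _).mpr ?_⟩
      have : (g ∘ e.symm) ∘ e = g := by
        funext x; simp
      rw [this]
      exact hg
  · intro k f g hf hg u v
    have h2 := h.2 k (f ∘ e) (g ∘ e) ((strict_map e H k f).mp hf) ((strict_map e H k g).mp hg)
      (e.symm u) (e.symm v)
    simpa using h2

def vEquiv (c d : ℕ) : V c d ≃ Fin (c+1+d+d+1) :=
  (((finSumFinEquiv.sumCongr (Equiv.refl (Fin d))).trans finSumFinEquiv).sumCongr
    (Equiv.refl (Fin 1))).trans finSumFinEquiv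

end OneReal

/-- for any finite set `S` of integers with `min S ≥ 2` there is a
mixed hypergraph on at most `2·max S - min S` vertices that is a one-realization
of `S`. -/
theorem exists_small_one_realization (S : Finset ℕ) (hne : S.Nonempty)
    (h2 : 2 ≤ S.min' hne) :
    ∃ (m : ℕ) (H : MixedHypergraph (Fin m)),
      m ≤ 2 * S.max' hne - S.min' hne ∧ IsOneRealization H (↑S : Set ℕ) := by
  set a := S.min' hne with ha
  set b := S.max' hne with hb
  have hab : a ≤ b := S.min'_le _ (S.max'_mem hne)
  obtain ⟨c, hc⟩ : ∃ c, a = c + 2 := ⟨a - 2, by omega⟩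
  obtain ⟨d, hd⟩ : ∃ d, b = a + d := ⟨b - a, by omega⟩
  have haS : a ∈ S := S.min'_mem hne
  have hbS : b ∈ S := S.max'_mem hne
  set P : ℕ → Prop := fun t => a + t ∈ S with hP
  have hP0 : P 0 := by simpa [hP] using haS
  have hPd : P d := by rw [hP]; simpa [← hd] using hbS
  have hreal := OneReal.oneRealization_map (OneReal.vEquiv c d) _ _
    (OneReal.oneReal c d P hP0 hPd)
  have hset : {k | ∃ t, t ≤ d ∧ P t ∧ k = c + 2 + t} = (↑S : Set ℕ) := by
    ext k
    simp only [Set.mem_setOf_eq, Finset.coe_sort_coe, Finset.mem_coe]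
    constructor
    · rintro ⟨t, htd, hPt, rfl⟩
      have : c + 2 + t = a + t := by omega
      rw [this]
      exact hPt
    · intro hk
      have h1 : a ≤ k := S.min'_le k hk
      have h2 : k ≤ b := S.le_max' k hk
      refine ⟨k - a, by omega, ?_, by omega⟩
      show a + (k - a) ∈ S
      have : a + (k - a) = k := by omega
      rw [this]
      exact hk
  rw [hset] at hreal
  exact ⟨c+1+d+d+1, _, by omega, hreal⟩
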